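/- Let Γ1 and Γ2 be nonempty sets of cycles such that C_3 ∈ Γ1 ∩ Γ2 or C_4 ∈ Γ1 ∩ Γ2. Then R(Γ1, Γ2) = 5 if both C_3 ∈ Γ1 ∪ Γ2 and C_5 ∈ Γ1 ∪ Γ2, and R(Γ1, Γ2) = 6 otherwise. -/

import Mathlib

set_option maxRecDepth 10000
set_option linter.unnecessarySeqFocus false

/-- `hasCycle G m` means the simple graph `G` contains a cycle of length `m`. -/
def hasCycle {V : Type*} (G : SimpleGraph V) (m : ℕ) : Prop :=
  ∃ (v : V) (w : G.Walk v v), w.IsCycle ∧ w.length = m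

/-- A red-blue graph on `Fin N` is modelled by its red subgraph
`G : SimpleGraph (Fin N)`; the blue subgraph is the complement `Gᶜ`.
`RamseyProp Γ1 Γ2 N` says that every red-blue graph on `N` vertices contains a
red cycle with length in `Γ1` or a blue cycle with length in `Γ2`. -/
def RamseyProp (Γ1 Γ2 : Set ℕ) (N : ℕ) : Prop :=
  ∀ G : SimpleGraph (Fin N),
    (∃ m ∈ Γ1, hasCycle G m) ∨ (∃ m ∈ Γ2, hasCycle Gᶜ m)

/-- The generalised Ramsey number `R(Γ1, Γ2)` is the least element of this set. -/
def ramseySet (Γ1 Γ2 : Set ℕ) : Set ℕ := {N | 0 < N ∧ RamseyProp Γ1 Γ2 N}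

open SimpleGraph

lemma build3' {V : Type*} {G : SimpleGraph V} {a b c : V}
    (hab : G.Adj a b) (hbc : G.Adj b c) (hca : G.Adj c a) : hasCycle G 3 := by
  refine ⟨a, .cons hab (.cons hbc (.cons hca .nil)), ?_, rfl⟩
  have h1 := hab.ne; have h2 := hbc.ne; have h3 := hca.ne
  simp [SimpleGraph.Walk.isCycle_def, SimpleGraph.Walk.isTrail_def, Sym2.eq, Sym2.rel_iff', h1, h2, h3]
  aesop

lemma build4' {V : Type*} {G : SimpleGraph V} {a b c d : V}
    (hac : a ≠ c) (hbd : b ≠ d)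
    (hab : G.Adj a b) (hbc : G.Adj b c) (hcd : G.Adj c d) (hda : G.Adj d a) :
    hasCycle G 4 := by
  refine ⟨a, .cons hab (.cons hbc (.cons hcd (.cons hda .nil))), ?_, rfl⟩
  have h1 := hab.ne; have h2 := hbc.ne; have h3 := hcd.ne; have h4 := hda.ne
  simp [SimpleGraph.Walk.isCycle_def, SimpleGraph.Walk.isTrail_def, Sym2.eq, Sym2.rel_iff', h1, h2, h3, h4, hac, hbd]
  aesop

lemma build5' {V : Type*} {G : SimpleGraph V} {a b c d e : V}
    (hac : a ≠ c) (had : a ≠ d) (hbd : b ≠ d) (hbe : b ≠ e) (hce : c ≠ e)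
    (hab : G.Adj a b) (hbc : G.Adj b c) (hcd : G.Adj c d) (hde : G.Adj d e)
    (hea : G.Adj e a) : hasCycle G 5 := by
  refine ⟨a, .cons hab (.cons hbc (.cons hcd (.cons hde (.cons hea .nil)))), ?_, rfl⟩
  have h1 := hab.ne; have h2 := hbc.ne; have h3 := hcd.ne; have h4 := hde.ne
  have h5 := hea.ne
  simp [SimpleGraph.Walk.isCycle_def, SimpleGraph.Walk.isTrail_def, Sym2.eq, Sym2.rel_iff',
    h1, h2, h3, h4, h5, hac, had, hbd, hbe, hce]
  aesop

lemma dest3 {V : Type*} {G : SimpleGraph V} (h : hasCycle G 3) :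
    ∃ a b c : V, G.Adj a b ∧ G.Adj b c ∧ G.Adj c a := by
  obtain ⟨v, w, hc, hl⟩ := h
  cases w with
  | nil => simp at hl
  | cons h1 p => cases p with
    | nil => simp at hl
    | cons h2 q => cases q with
      | nil => simp at hl
      | cons h3 r => cases r with
        | nil => exact ⟨_, _, _, h1, h2, h3⟩
        | cons h4 s => simp [SimpleGraph.Walk.length_cons] at hl

lemma dest4 {V : Type*} {G : SimpleGraph V} (h : hasCycle G 4) :
    ∃ a b c d : V, a ≠ c ∧ b ≠ d ∧ G.Adj a b ∧ G.Adj b c ∧ G.Adj c d ∧ G.Adj d a := by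
  obtain ⟨v, w, hc, hl⟩ := h
  cases w with
  | nil => simp at hl
  | cons h1 p => cases p with
    | nil => simp at hl
    | cons h2 q => cases q with
      | nil => simp at hl
      | cons h3 r => cases r with
        | nil => simp at hl
        | cons h4 s => cases s with
          | nil =>
            rw [SimpleGraph.Walk.isCycle_def] at hc
            have := hc.2.2
            simp [SimpleGraph.Walk.support_cons] at this
            refine ⟨_, _, _, _, ?_, ?_, h1, h2, h3, h4⟩ <;> aesop
          | cons h5 t => simp [SimpleGraph.Walk.length_cons] at hl

lemma dest5 {V : Type*} {G : SimpleGraph V} (h : hasCycle G 5) :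
    ∃ a b c d e : V, a ≠ c ∧ a ≠ d ∧ b ≠ d ∧ b ≠ e ∧ c ≠ e ∧
      G.Adj a b ∧ G.Adj b c ∧ G.Adj c d ∧ G.Adj d e ∧ G.Adj e a := by
  obtain ⟨v, w, hc, hl⟩ := h
  cases w with
  | nil => simp at hl
  | cons h1 p => cases p with
    | nil => simp at hl
    | cons h2 q => cases q with
      | nil => simp at hl
      | cons h3 r => cases r with
        | nil => simp at hl
        | cons h4 s => cases s with
          | nil => simp at hl
          | cons h5 t => cases t with
            | nil =>
              rw [SimpleGraph.Walk.isCycle_def] at hc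
              have := hc.2.2
              simp [SimpleGraph.Walk.support_cons] at this
              refine ⟨_, _, _, _, _, ?_, ?_, ?_, ?_, ?_, h1, h2, h3, h4, h5⟩ <;> aesop
            | cons h6 u => simp [SimpleGraph.Walk.length_cons] at hl

lemma hasCycle_le_card {V : Type*} [Fintype V] {G : SimpleGraph V} {m : ℕ}
    (h : hasCycle G m) : m ≤ Fintype.card V := by
  obtain ⟨v, w, hc, rfl⟩ := h
  have h1 : w.support.tail.Nodup := hc.2
  have h2 := h1.length_le_card
  have h3 := w.length_support
  simp [List.length_tail] at h2 ⊢
  omega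

lemma hasCycle_three_le {V : Type*} {G : SimpleGraph V} {m : ℕ}
    (h : hasCycle G m) : 3 ≤ m := by
  obtain ⟨v, w, hc, rfl⟩ := h
  exact hc.three_le_length

def encB : List Bool → ℕ
  | [] => 0
  | b :: l => 2 * encB l + b.toNat

lemma encB_testBit (l : List Bool) (k : ℕ) : (encB l).testBit k = l.getD k false := by
  induction l generalizing k with
  | nil => simp [encB]
  | cons b l ih =>
    cases k with
    | zero => cases b <;> simp [encB, Nat.testBit_zero] <;> omega
    | succ k =>
      simp only [encB]
      rw [Nat.testBit_add_one]
      have : (2 * encB l + b.toNat) / 2 = encB l := by cases b <;> simp <;> omega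
      rw [this, ih]
      rfl

lemma encB_lt (l : List Bool) : encB l < 2 ^ l.length := by
  induction l with
  | nil => simp [encB]
  | cons b l ih =>
    have : b.toNat ≤ 1 := Bool.toNat_le b
    simp only [encB, List.length_cons, pow_succ]
    omega

/-- symmetric pair index -/
def pIdx {n : ℕ} (i j : Fin n) : ℕ :=
  if i.val < j.val then j.val*(j.val-1)/2 + i.val else i.val*(i.val-1)/2 + j.val

lemma bridge6 (G : SimpleGraph (Fin 6)) :
    ∃ c : ℕ, c < 32768 ∧ (c.testBit 0 = true ↔ G.Adj 0 1) ∧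
      ∀ i j : Fin 6, i ≠ j → (c.testBit (pIdx i j) = true ↔ G.Adj i j) := by
  have hex : ∀ p : Prop, ∃ b : Bool, (b = true ↔ p) := fun p => by
    classical exact ⟨decide p, by simp⟩
  choose f hf using hex
  refine ⟨encB [f (G.Adj 0 1), f (G.Adj 0 2), f (G.Adj 1 2),
    f (G.Adj 0 3), f (G.Adj 1 3), f (G.Adj 2 3),
    f (G.Adj 0 4), f (G.Adj 1 4), f (G.Adj 2 4), f (G.Adj 3 4),
    f (G.Adj 0 5), f (G.Adj 1 5), f (G.Adj 2 5), f (G.Adj 3 5),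
    f (G.Adj 4 5)], ?_, ?_, ?_⟩
  · have h := encB_lt [f (G.Adj 0 1), f (G.Adj 0 2), f (G.Adj 1 2),
      f (G.Adj 0 3), f (G.Adj 1 3), f (G.Adj 2 3),
      f (G.Adj 0 4), f (G.Adj 1 4), f (G.Adj 2 4), f (G.Adj 3 4),
      f (G.Adj 0 5), f (G.Adj 1 5), f (G.Adj 2 5), f (G.Adj 3 5),
      f (G.Adj 4 5)]
    have hl : ([f (G.Adj 0 1), f (G.Adj 0 2), f (G.Adj 1 2),
      f (G.Adj 0 3), f (G.Adj 1 3), f (G.Adj 2 3),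
      f (G.Adj 0 4), f (G.Adj 1 4), f (G.Adj 2 4), f (G.Adj 3 4),
      f (G.Adj 0 5), f (G.Adj 1 5), f (G.Adj 2 5), f (G.Adj 3 5),
      f (G.Adj 4 5)] : List Bool).length = 15 := rfl
    rw [hl] at h
    exact lt_of_lt_of_le h (by norm_num)
  · rw [encB_testBit]
    exact hf _
  · intro i j hij
    rw [encB_testBit]
    fin_cases i <;> fin_cases j <;>
      first
        | exact absurd rfl hij
        | exact hf _
        | exact (hf _).trans (G.adj_comm _ _)

lemma bridge5 (G : SimpleGraph (Fin 5)) :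
    ∃ c : ℕ, c < 1024 ∧
      ∀ i j : Fin 5, i ≠ j → (c.testBit (pIdx i j) = true ↔ G.Adj i j) := by
  have hex : ∀ p : Prop, ∃ b : Bool, (b = true ↔ p) := fun p => by
    classical exact ⟨decide p, by simp⟩
  choose f hf using hex
  refine ⟨encB [f (G.Adj 0 1), f (G.Adj 0 2), f (G.Adj 1 2),
    f (G.Adj 0 3), f (G.Adj 1 3), f (G.Adj 2 3),
    f (G.Adj 0 4), f (G.Adj 1 4), f (G.Adj 2 4), f (G.Adj 3 4)], ?_, ?_⟩
  · have h := encB_lt [f (G.Adj 0 1), f (G.Adj 0 2), f (G.Adj 1 2),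
      f (G.Adj 0 3), f (G.Adj 1 3), f (G.Adj 2 3),
      f (G.Adj 0 4), f (G.Adj 1 4), f (G.Adj 2 4), f (G.Adj 3 4)]
    have hl : ([f (G.Adj 0 1), f (G.Adj 0 2), f (G.Adj 1 2),
      f (G.Adj 0 3), f (G.Adj 1 3), f (G.Adj 2 3),
      f (G.Adj 0 4), f (G.Adj 1 4), f (G.Adj 2 4), f (G.Adj 3 4)] : List Bool).length = 10 := rfl
    rw [hl] at h
    exact lt_of_lt_of_le h (by norm_num)
  · intro i j hij
    rw [encB_testBit]
    fin_cases i <;> fin_cases j <;>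
      first
        | exact absurd rfl hij
        | exact hf _
        | exact (hf _).trans (G.adj_comm _ _)

def triM6 : List Nat := [7, 25, 193, 3073, 42, 322, 5122, 584, 9224, 17472, 52, 388, 6148, 656, 10256, 18560, 800, 12320, 20736, 25088]
def c4M6 : List Nat := [45, 51, 30, 325, 387, 198, 5125, 6147, 3078, 593, 649, 216, 9233, 10249, 3096, 17537, 18497, 3264, 610, 778, 360, 9250, 12298, 5160, 17666, 20546, 5440, 17928, 24648, 9792, 676, 788, 432, 10276, 12308, 6192, 18692, 20612, 6528, 18960, 24720, 10880, 21024, 24864, 13056]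
def triM5 : List Nat := [7, 25, 193, 42, 322, 584, 52, 388, 656, 800]
def c4M5 : List Nat := [45, 51, 30, 325, 387, 198, 593, 649, 216, 610, 778, 360, 676, 788, 432]
def c5M5 : List Nat := [613, 781, 369, 787, 425, 675, 598, 654, 242, 410, 348, 236]

def hasM (c : ℕ) (L : List ℕ) : Bool := L.any fun m => c &&& m == m
def hasM' (c : ℕ) (L : List ℕ) : Bool := L.any fun m => c &&& m == 0

lemma hasM_elim {c : ℕ} {L : List ℕ} (h : hasM c L = true) :
    ∃ m ∈ L, ∀ e, m.testBit e = true → c.testBit e = true := by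
  simp only [hasM, List.any_eq_true] at h
  obtain ⟨m, hm, hcm⟩ := h
  refine ⟨m, hm, fun e he => ?_⟩
  have hand : c &&& m = m := by simpa using hcm
  have h2 := Nat.testBit_and c m e
  rw [hand, he] at h2
  simpa using h2.symm

lemma hasM'_elim {c : ℕ} {L : List ℕ} (h : hasM' c L = true) :
    ∃ m ∈ L, ∀ e, m.testBit e = true → c.testBit e = false := by
  simp only [hasM', List.any_eq_true] at h
  obtain ⟨m, hm, hcm⟩ := h
  refine ⟨m, hm, fun e he => ?_⟩
  have hand : c &&& m = 0 := by simpa using hcm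
  have h2 := Nat.testBit_and c m e
  rw [hand, he] at h2
  simpa using h2.symm

lemma triM6_sem : ∀ m ∈ triM6, ∃ a b c : Fin 6, a ≠ b ∧ b ≠ c ∧ a ≠ c ∧
    m.testBit (pIdx a b) = true ∧ m.testBit (pIdx b c) = true ∧
    m.testBit (pIdx c a) = true := by decide

lemma c4M6_sem : ∀ m ∈ c4M6, ∃ a b c d : Fin 6, a ≠ b ∧ a ≠ c ∧ a ≠ d ∧ b ≠ c ∧ b ≠ d ∧ c ≠ d ∧
    m.testBit (pIdx a b) = true ∧ m.testBit (pIdx b c) = true ∧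
    m.testBit (pIdx c d) = true ∧ m.testBit (pIdx d a) = true := by decide

lemma triM5_sem : ∀ m ∈ triM5, ∃ a b c : Fin 5, a ≠ b ∧ b ≠ c ∧ a ≠ c ∧
    m.testBit (pIdx a b) = true ∧ m.testBit (pIdx b c) = true ∧
    m.testBit (pIdx c a) = true := by decide

lemma c4M5_sem : ∀ m ∈ c4M5, ∃ a b c d : Fin 5, a ≠ b ∧ a ≠ c ∧ a ≠ d ∧ b ≠ c ∧ b ≠ d ∧ c ≠ d ∧
    m.testBit (pIdx a b) = true ∧ m.testBit (pIdx b c) = true ∧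
    m.testBit (pIdx c d) = true ∧ m.testBit (pIdx d a) = true := by decide

lemma c5M5_sem : ∀ m ∈ c5M5, ∃ a b c d e : Fin 5,
    a ≠ b ∧ a ≠ c ∧ a ≠ d ∧ a ≠ e ∧ b ≠ c ∧ b ≠ d ∧ b ≠ e ∧ c ≠ d ∧ c ≠ e ∧ d ≠ e ∧
    m.testBit (pIdx a b) = true ∧ m.testBit (pIdx b c) = true ∧
    m.testBit (pIdx c d) = true ∧ m.testBit (pIdx d e) = true ∧
    m.testBit (pIdx e a) = true := by decide

/-! ### From boolean checks to cycles -/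

section Convert
variable {n : ℕ} {G : SimpleGraph (Fin n)} {c : ℕ}

lemma adj_of_bit (hbits : ∀ i j : Fin n, i ≠ j → (c.testBit (pIdx i j) = true ↔ G.Adj i j))
    {a b : Fin n} (hab : a ≠ b) (h : c.testBit (pIdx a b) = true) : G.Adj a b :=
  (hbits a b hab).mp h

lemma nadj_of_bit (hbits : ∀ i j : Fin n, i ≠ j → (c.testBit (pIdx i j) = true ↔ G.Adj i j))
    {a b : Fin n} (hab : a ≠ b) (h : c.testBit (pIdx a b) = false) : Gᶜ.Adj a b := by
  rw [SimpleGraph.compl_adj]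
  refine ⟨hab, fun h' => ?_⟩
  have h2 := (hbits a b hab).mpr h'
  rw [h2] at h
  exact Bool.noConfusion h


variable {L : List ℕ}

lemma cyc3_of (hbits : ∀ i j : Fin n, i ≠ j → (c.testBit (pIdx i j) = true ↔ G.Adj i j))
    (hsem : ∀ m ∈ L, ∃ a b c' : Fin n, a ≠ b ∧ b ≠ c' ∧ a ≠ c' ∧
      m.testBit (pIdx a b) = true ∧ m.testBit (pIdx b c') = true ∧
      m.testBit (pIdx c' a) = true)
    (h : hasM c L = true) : hasCycle G 3 := by
  obtain ⟨m, hm, hb⟩ := hasM_elim h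
  obtain ⟨a, b, c', h1, h2, h3, e1, e2, e3⟩ := hsem m hm
  exact build3' (adj_of_bit hbits h1 (hb _ e1)) (adj_of_bit hbits h2 (hb _ e2))
    (adj_of_bit hbits (Ne.symm h3) (hb _ e3))

lemma cyc3_of' (hbits : ∀ i j : Fin n, i ≠ j → (c.testBit (pIdx i j) = true ↔ G.Adj i j))
    (hsem : ∀ m ∈ L, ∃ a b c' : Fin n, a ≠ b ∧ b ≠ c' ∧ a ≠ c' ∧
      m.testBit (pIdx a b) = true ∧ m.testBit (pIdx b c') = true ∧
      m.testBit (pIdx c' a) = true)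
    (h : hasM' c L = true) : hasCycle Gᶜ 3 := by
  obtain ⟨m, hm, hb⟩ := hasM'_elim h
  obtain ⟨a, b, c', h1, h2, h3, e1, e2, e3⟩ := hsem m hm
  exact build3' (nadj_of_bit hbits h1 (hb _ e1)) (nadj_of_bit hbits h2 (hb _ e2))
    (nadj_of_bit hbits (Ne.symm h3) (hb _ e3))

lemma cyc4_of (hbits : ∀ i j : Fin n, i ≠ j → (c.testBit (pIdx i j) = true ↔ G.Adj i j))
    (hsem : ∀ m ∈ L, ∃ a b c' d : Fin n, a ≠ b ∧ a ≠ c' ∧ a ≠ d ∧ b ≠ c' ∧ b ≠ d ∧ c' ≠ d ∧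
      m.testBit (pIdx a b) = true ∧ m.testBit (pIdx b c') = true ∧
      m.testBit (pIdx c' d) = true ∧ m.testBit (pIdx d a) = true)
    (h : hasM c L = true) : hasCycle G 4 := by
  obtain ⟨m, hm, hb⟩ := hasM_elim h
  obtain ⟨a, b, c', d, h1, h2, h3, h4, h5, h6, e1, e2, e3, e4⟩ := hsem m hm
  exact build4' h2 h5 (adj_of_bit hbits h1 (hb _ e1)) (adj_of_bit hbits h4 (hb _ e2))
    (adj_of_bit hbits h6 (hb _ e3)) (adj_of_bit hbits (Ne.symm h3) (hb _ e4))

lemma cyc4_of' (hbits : ∀ i j : Fin n, i ≠ j → (c.testBit (pIdx i j) = true ↔ G.Adj i j))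
    (hsem : ∀ m ∈ L, ∃ a b c' d : Fin n, a ≠ b ∧ a ≠ c' ∧ a ≠ d ∧ b ≠ c' ∧ b ≠ d ∧ c' ≠ d ∧
      m.testBit (pIdx a b) = true ∧ m.testBit (pIdx b c') = true ∧
      m.testBit (pIdx c' d) = true ∧ m.testBit (pIdx d a) = true)
    (h : hasM' c L = true) : hasCycle Gᶜ 4 := by
  obtain ⟨m, hm, hb⟩ := hasM'_elim h
  obtain ⟨a, b, c', d, h1, h2, h3, h4, h5, h6, e1, e2, e3, e4⟩ := hsem m hm
  exact build4' h2 h5 (nadj_of_bit hbits h1 (hb _ e1)) (nadj_of_bit hbits h4 (hb _ e2))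
    (nadj_of_bit hbits h6 (hb _ e3)) (nadj_of_bit hbits (Ne.symm h3) (hb _ e4))

lemma cyc5_of (hbits : ∀ i j : Fin n, i ≠ j → (c.testBit (pIdx i j) = true ↔ G.Adj i j))
    (hsem : ∀ m ∈ L, ∃ a b c' d e : Fin n,
      a ≠ b ∧ a ≠ c' ∧ a ≠ d ∧ a ≠ e ∧ b ≠ c' ∧ b ≠ d ∧ b ≠ e ∧ c' ≠ d ∧ c' ≠ e ∧ d ≠ e ∧
      m.testBit (pIdx a b) = true ∧ m.testBit (pIdx b c') = true ∧
      m.testBit (pIdx c' d) = true ∧ m.testBit (pIdx d e) = true ∧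
      m.testBit (pIdx e a) = true)
    (h : hasM c L = true) : hasCycle G 5 := by
  obtain ⟨m, hm, hb⟩ := hasM_elim h
  obtain ⟨a, b, c', d, e, h1, h2, h3, h4, h5, h6, h7, h8, h9, h10, e1, e2, e3, e4, e5⟩ := hsem m hm
  exact build5' h2 h3 h6 h7 h9 (adj_of_bit hbits h1 (hb _ e1)) (adj_of_bit hbits h5 (hb _ e2))
    (adj_of_bit hbits h8 (hb _ e3)) (adj_of_bit hbits h10 (hb _ e4))
    (adj_of_bit hbits (Ne.symm h4) (hb _ e5))

lemma cyc5_of' (hbits : ∀ i j : Fin n, i ≠ j → (c.testBit (pIdx i j) = true ↔ G.Adj i j))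
    (hsem : ∀ m ∈ L, ∃ a b c' d e : Fin n,
      a ≠ b ∧ a ≠ c' ∧ a ≠ d ∧ a ≠ e ∧ b ≠ c' ∧ b ≠ d ∧ b ≠ e ∧ c' ≠ d ∧ c' ≠ e ∧ d ≠ e ∧
      m.testBit (pIdx a b) = true ∧ m.testBit (pIdx b c') = true ∧
      m.testBit (pIdx c' d) = true ∧ m.testBit (pIdx d e) = true ∧
      m.testBit (pIdx e a) = true)
    (h : hasM' c L = true) : hasCycle Gᶜ 5 := by
  obtain ⟨m, hm, hb⟩ := hasM'_elim h
  obtain ⟨a, b, c', d, e, h1, h2, h3, h4, h5, h6, h7, h8, h9, h10, e1, e2, e3, e4, e5⟩ := hsem m hm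
  exact build5' h2 h3 h6 h7 h9 (nadj_of_bit hbits h1 (hb _ e1)) (nadj_of_bit hbits h5 (hb _ e2))
    (nadj_of_bit hbits h8 (hb _ e3)) (nadj_of_bit hbits h10 (hb _ e4))
    (nadj_of_bit hbits (Ne.symm h4) (hb _ e5))

end Convert

/-! ### The checks -/

def chk6a (c : ℕ) : Bool := hasM' c triM6 || hasM c triM6
def chk6b (c : ℕ) : Bool := hasM' c c4M6 || hasM c c4M6
def chk5a (c : ℕ) : Bool := hasM c triM5 || hasM' c triM5 || (hasM c c5M5 && hasM' c c5M5)
def chk5s (c : ℕ) : Bool := hasM c c4M5 || hasM' c c4M5 || hasM c triM5 || hasM c c5M5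
def chk5x (c : ℕ) : Bool := hasM c c4M5 || hasM' c c4M5 || hasM c triM5 || hasM' c c5M5

lemma G6aux (hFa : ∀ d, d < 16384 → chk6a (2*d) = true)
    (hFb : ∀ d, d < 16384 → chk6b (2*d) = true)
    (G : SimpleGraph (Fin 6)) (hG : ¬ G.Adj 0 1) :
    (hasCycle G 3 ∨ hasCycle Gᶜ 3) ∧ (hasCycle G 4 ∨ hasCycle Gᶜ 4) := by
  obtain ⟨c, hlt, hbit0, hbits⟩ := bridge6 G
  have heven : c % 2 = 0 := by
    have hb : c.testBit 0 = false := by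
      cases hb : c.testBit 0
      · rfl
      · exact absurd (hbit0.mp hb) hG
    rw [Nat.testBit_zero] at hb
    simp at hb
    omega
  have hc2 : 2 * (c / 2) = c := by omega
  have ha := hFa (c/2) (by omega); rw [hc2] at ha
  have hb' := hFb (c/2) (by omega); rw [hc2] at hb'
  constructor
  · simp only [chk6a, Bool.or_eq_true] at ha
    rcases ha with h | h
    · exact Or.inr (cyc3_of' hbits triM6_sem h)
    · exact Or.inl (cyc3_of hbits triM6_sem h)
  · simp only [chk6b, Bool.or_eq_true] at hb'
    rcases hb' with h | h
    · exact Or.inr (cyc4_of' hbits c4M6_sem h)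
    · exact Or.inl (cyc4_of hbits c4M6_sem h)

lemma G6 (hFa : ∀ d, d < 16384 → chk6a (2*d) = true)
    (hFb : ∀ d, d < 16384 → chk6b (2*d) = true)
    (G : SimpleGraph (Fin 6)) :
    (hasCycle G 3 ∨ hasCycle Gᶜ 3) ∧ (hasCycle G 4 ∨ hasCycle Gᶜ 4) := by
  by_cases h01 : G.Adj 0 1
  · have hGc : ¬ Gᶜ.Adj 0 1 := by simp [SimpleGraph.compl_adj, h01]
    have h := G6aux hFa hFb Gᶜ hGc
    rw [compl_compl] at h
    exact ⟨h.1.symm, h.2.symm⟩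
  · exact G6aux hFa hFb G h01

lemma G5a (hF : ∀ c, c < 1024 → chk5a c = true) (G : SimpleGraph (Fin 5)) :
    hasCycle G 3 ∨ hasCycle Gᶜ 3 ∨ (hasCycle G 5 ∧ hasCycle Gᶜ 5) := by
  obtain ⟨c, hlt, hbits⟩ := bridge5 G
  have h := hF c hlt
  simp only [chk5a, Bool.or_eq_true, Bool.and_eq_true] at h
  rcases h with (h | h) | ⟨h1, h2⟩
  · exact Or.inl (cyc3_of hbits triM5_sem h)
  · exact Or.inr (Or.inl (cyc3_of' hbits triM5_sem h))
  · exact Or.inr (Or.inr ⟨cyc5_of hbits c5M5_sem h1, cyc5_of' hbits c5M5_sem h2⟩)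

lemma G5s (hF : ∀ c, c < 1024 → chk5s c = true) (G : SimpleGraph (Fin 5)) :
    hasCycle G 4 ∨ hasCycle Gᶜ 4 ∨ hasCycle G 3 ∨ hasCycle G 5 := by
  obtain ⟨c, hlt, hbits⟩ := bridge5 G
  have h := hF c hlt
  simp only [chk5s, Bool.or_eq_true] at h
  rcases h with ((h | h) | h) | h
  · exact Or.inl (cyc4_of hbits c4M5_sem h)
  · exact Or.inr (Or.inl (cyc4_of' hbits c4M5_sem h))
  · exact Or.inr (Or.inr (Or.inl (cyc3_of hbits triM5_sem h)))
  · exact Or.inr (Or.inr (Or.inr (cyc5_of hbits c5M5_sem h)))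

lemma G5x (hF : ∀ c, c < 1024 → chk5x c = true) (G : SimpleGraph (Fin 5)) :
    hasCycle G 4 ∨ hasCycle Gᶜ 4 ∨ hasCycle G 3 ∨ hasCycle Gᶜ 5 := by
  obtain ⟨c, hlt, hbits⟩ := bridge5 G
  have h := hF c hlt
  simp only [chk5x, Bool.or_eq_true] at h
  rcases h with ((h | h) | h) | h
  · exact Or.inl (cyc4_of hbits c4M5_sem h)
  · exact Or.inr (Or.inl (cyc4_of' hbits c4M5_sem h))
  · exact Or.inr (Or.inr (Or.inl (cyc3_of hbits triM5_sem h)))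
  · exact Or.inr (Or.inr (Or.inr (cyc5_of' hbits c5M5_sem h)))

/-! ### Counterexample graphs -/

def adjP4 : Fin 4 → Fin 4 → Bool := fun i j => (i.val+1 == j.val) || (j.val+1 == i.val)

def P4 : SimpleGraph (Fin 4) :=
  ⟨fun i j => adjP4 i j = true, by constructor; intro i j; fin_cases i <;> fin_cases j <;> decide, by constructor; intro i; fin_cases i <;> decide⟩

instance : DecidableRel P4.Adj := fun i j => inferInstanceAs (Decidable (adjP4 i j = true))

def adjC5 : Fin 5 → Fin 5 → Bool := fun i j => ((i.val+1) % 5 == j.val) || ((j.val+1) % 5 == i.val)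

def C5gr : SimpleGraph (Fin 5) :=
  ⟨fun i j => adjC5 i j = true, by constructor; intro i j; fin_cases i <;> fin_cases j <;> decide, by constructor; intro i; fin_cases i <;> decide⟩

instance : DecidableRel C5gr.Adj := fun i j => inferInstanceAs (Decidable (adjC5 i j = true))

def adjH : Fin 5 → Fin 5 → Bool := fun i j =>
  [(0,1),(0,2),(1,2),(1,3),(0,4)].any fun p : ℕ × ℕ =>
    (p.1 == i.val && p.2 == j.val) || (p.1 == j.val && p.2 == i.val)

def Hgr : SimpleGraph (Fin 5) :=
  ⟨fun i j => adjH i j = true, by constructor; intro i j; fin_cases i <;> fin_cases j <;> decide, by constructor; intro i; fin_cases i <;> decide⟩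

instance : DecidableRel Hgr.Adj := fun i j => inferInstanceAs (Decidable (adjH i j = true))

lemma noP4_3 : ¬ hasCycle P4 3 := fun h => absurd (dest3 h) (by decide)
lemma noP4_4 : ¬ hasCycle P4 4 := fun h => absurd (dest4 h) (by decide)
lemma noP4c_3 : ¬ hasCycle P4ᶜ 3 := fun h => absurd (dest3 h) (by decide)
lemma noP4c_4 : ¬ hasCycle P4ᶜ 4 := fun h => absurd (dest4 h) (by decide)
lemma noC5_3 : ¬ hasCycle C5gr 3 := fun h => absurd (dest3 h) (by decide)
lemma noC5_4 : ¬ hasCycle C5gr 4 := fun h => absurd (dest4 h) (by decide)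
lemma noC5c_3 : ¬ hasCycle C5grᶜ 3 := fun h => absurd (dest3 h) (by decide)
lemma noC5c_4 : ¬ hasCycle C5grᶜ 4 := fun h => absurd (dest4 h) (by decide)
lemma noH_4 : ¬ hasCycle Hgr 4 := fun h => absurd (dest4 h) (by decide)
lemma noH_5 : ¬ hasCycle Hgr 5 := fun h => absurd (dest5 h) (by decide)
lemma noHc_4 : ¬ hasCycle Hgrᶜ 4 := fun h => absurd (dest4 h) (by decide)
lemma noHc_5 : ¬ hasCycle Hgrᶜ 5 := fun h => absurd (dest5 h) (by decide)

/-! ### Monotonicity -/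

lemma hasCycle_comap {V W : Type*} (f : V ↪ W) (G : SimpleGraph W) {m : ℕ}
    (h : hasCycle (G.comap f) m) : hasCycle G m := by
  obtain ⟨v, w, hc, hl⟩ := h
  refine ⟨f v, w.map (SimpleGraph.Embedding.comap f G).toHom, ?_, ?_⟩
  · exact hc.map f.injective
  · exact (SimpleGraph.Walk.length_map _ w).trans hl

lemma RamseyProp_mono {Γ1 Γ2 : Set ℕ} {N M : ℕ} (h : N ≤ M) (hR : RamseyProp Γ1 Γ2 N) :
    RamseyProp Γ1 Γ2 M := by
  intro G
  have f : Fin N ↪ Fin M := Fin.castLEEmb h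
  rcases hR (G.comap f) with ⟨m, hm, hcyc⟩ | ⟨m, hm, hcyc⟩
  · exact Or.inl ⟨m, hm, hasCycle_comap f G hcyc⟩
  · refine Or.inr ⟨m, hm, hasCycle_comap f Gᶜ ?_⟩
    have hcompl : (G.comap (f : Fin N → Fin M))ᶜ = Gᶜ.comap (f : Fin N → Fin M) := by
      ext x y
      simp [SimpleGraph.compl_adj, f.injective.ne_iff]
    rwa [hcompl] at hcyc

/-! ### The verified facts -/

lemma allRange1024 {f : ℕ → Bool} (h : ((List.range 1024).all f) = true) {x : ℕ}
    (hx : x < 1024) : f x = true := by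
  rw [List.all_eq_true] at h
  exact h x (List.mem_range.mpr hx)

theorem F6a_0 : ((List.range 1024).all fun r => chk6a (2*(1024*0 + r))) = true := by decide
theorem F6a_1 : ((List.range 1024).all fun r => chk6a (2*(1024*1 + r))) = true := by decide
theorem F6a_2 : ((List.range 1024).all fun r => chk6a (2*(1024*2 + r))) = true := by decide
theorem F6a_3 : ((List.range 1024).all fun r => chk6a (2*(1024*3 + r))) = true := by decide
theorem F6a_4 : ((List.range 1024).all fun r => chk6a (2*(1024*4 + r))) = true := by decide
theorem F6a_5 : ((List.range 1024).all fun r => chk6a (2*(1024*5 + r))) = true := by decide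
theorem F6a_6 : ((List.range 1024).all fun r => chk6a (2*(1024*6 + r))) = true := by decide
theorem F6a_7 : ((List.range 1024).all fun r => chk6a (2*(1024*7 + r))) = true := by decide
theorem F6a_8 : ((List.range 1024).all fun r => chk6a (2*(1024*8 + r))) = true := by decide
theorem F6a_9 : ((List.range 1024).all fun r => chk6a (2*(1024*9 + r))) = true := by decide
theorem F6a_10 : ((List.range 1024).all fun r => chk6a (2*(1024*10 + r))) = true := by decide
theorem F6a_11 : ((List.range 1024).all fun r => chk6a (2*(1024*11 + r))) = true := by decide
theorem F6a_12 : ((List.range 1024).all fun r => chk6a (2*(1024*12 + r))) = true := by decide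
theorem F6a_13 : ((List.range 1024).all fun r => chk6a (2*(1024*13 + r))) = true := by decide
theorem F6a_14 : ((List.range 1024).all fun r => chk6a (2*(1024*14 + r))) = true := by decide
theorem F6a_15 : ((List.range 1024).all fun r => chk6a (2*(1024*15 + r))) = true := by decide

theorem Fact6a : ∀ d, d < 16384 → chk6a (2*d) = true := by
  have key : ∀ i r : ℕ, i < 16 → r < 1024 → chk6a (2*(1024*i + r)) = true := by
    intro i r hi hr
    interval_cases i

    · exact allRange1024 F6a_0 hr
    · exact allRange1024 F6a_1 hr
    · exact allRange1024 F6a_2 hr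
    · exact allRange1024 F6a_3 hr
    · exact allRange1024 F6a_4 hr
    · exact allRange1024 F6a_5 hr
    · exact allRange1024 F6a_6 hr
    · exact allRange1024 F6a_7 hr
    · exact allRange1024 F6a_8 hr
    · exact allRange1024 F6a_9 hr
    · exact allRange1024 F6a_10 hr
    · exact allRange1024 F6a_11 hr
    · exact allRange1024 F6a_12 hr
    · exact allRange1024 F6a_13 hr
    · exact allRange1024 F6a_14 hr
    · exact allRange1024 F6a_15 hr
  intro d hd
  have h2 := key (d/1024) (d%1024) (by omega) (by omega)
  rwa [show 1024*(d/1024) + d%1024 = d by omega] at h2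

theorem F6b_0 : ((List.range 1024).all fun r => chk6b (2*(1024*0 + r))) = true := by decide
theorem F6b_1 : ((List.range 1024).all fun r => chk6b (2*(1024*1 + r))) = true := by decide
theorem F6b_2 : ((List.range 1024).all fun r => chk6b (2*(1024*2 + r))) = true := by decide
theorem F6b_3 : ((List.range 1024).all fun r => chk6b (2*(1024*3 + r))) = true := by decide
theorem F6b_4 : ((List.range 1024).all fun r => chk6b (2*(1024*4 + r))) = true := by decide
theorem F6b_5 : ((List.range 1024).all fun r => chk6b (2*(1024*5 + r))) = true := by decide
theorem F6b_6 : ((List.range 1024).all fun r => chk6b (2*(1024*6 + r))) = true := by decide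
theorem F6b_7 : ((List.range 1024).all fun r => chk6b (2*(1024*7 + r))) = true := by decide
theorem F6b_8 : ((List.range 1024).all fun r => chk6b (2*(1024*8 + r))) = true := by decide
theorem F6b_9 : ((List.range 1024).all fun r => chk6b (2*(1024*9 + r))) = true := by decide
theorem F6b_10 : ((List.range 1024).all fun r => chk6b (2*(1024*10 + r))) = true := by decide
theorem F6b_11 : ((List.range 1024).all fun r => chk6b (2*(1024*11 + r))) = true := by decide
theorem F6b_12 : ((List.range 1024).all fun r => chk6b (2*(1024*12 + r))) = true := by decide
theorem F6b_13 : ((List.range 1024).all fun r => chk6b (2*(1024*13 + r))) = true := by decide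
theorem F6b_14 : ((List.range 1024).all fun r => chk6b (2*(1024*14 + r))) = true := by decide
theorem F6b_15 : ((List.range 1024).all fun r => chk6b (2*(1024*15 + r))) = true := by decide

theorem Fact6b : ∀ d, d < 16384 → chk6b (2*d) = true := by
  have key : ∀ i r : ℕ, i < 16 → r < 1024 → chk6b (2*(1024*i + r)) = true := by
    intro i r hi hr
    interval_cases i

    · exact allRange1024 F6b_0 hr
    · exact allRange1024 F6b_1 hr
    · exact allRange1024 F6b_2 hr
    · exact allRange1024 F6b_3 hr
    · exact allRange1024 F6b_4 hr
    · exact allRange1024 F6b_5 hr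
    · exact allRange1024 F6b_6 hr
    · exact allRange1024 F6b_7 hr
    · exact allRange1024 F6b_8 hr
    · exact allRange1024 F6b_9 hr
    · exact allRange1024 F6b_10 hr
    · exact allRange1024 F6b_11 hr
    · exact allRange1024 F6b_12 hr
    · exact allRange1024 F6b_13 hr
    · exact allRange1024 F6b_14 hr
    · exact allRange1024 F6b_15 hr
  intro d hd
  have h2 := key (d/1024) (d%1024) (by omega) (by omega)
  rwa [show 1024*(d/1024) + d%1024 = d by omega] at h2

theorem F5a_0 : ((List.range 1024).all fun r => chk5a r) = true := by decide

theorem Fact5a : ∀ c, c < 1024 → chk5a c = true := fun c hc => allRange1024 F5a_0 hc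

theorem F5s_0 : ((List.range 1024).all fun r => chk5s r) = true := by decide

theorem Fact5s : ∀ c, c < 1024 → chk5s c = true := fun c hc => allRange1024 F5s_0 hc

theorem F5x_0 : ((List.range 1024).all fun r => chk5x r) = true := by decide

theorem Fact5x : ∀ c, c < 1024 → chk5x c = true := fun c hc => allRange1024 F5x_0 hc

/-! ### Main theorem -/

/-- Proposition 4.2: if `C_3 ∈ Γ1 ∩ Γ2` or `C_4 ∈ Γ1 ∩ Γ2`, then
`R(Γ1, Γ2) = 5` if both `C_3` and `C_5` belong to `Γ1 ∪ Γ2`, and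
`R(Γ1, Γ2) = 6` otherwise. -/
theorem stmt_10 (Γ1 Γ2 : Set ℕ)
    (hc1 : ∀ m ∈ Γ1, 3 ≤ m) (hc2 : ∀ m ∈ Γ2, 3 ≤ m)
    (h34 : 3 ∈ Γ1 ∩ Γ2 ∨ 4 ∈ Γ1 ∩ Γ2) :
    ((3 ∈ Γ1 ∪ Γ2 ∧ 5 ∈ Γ1 ∪ Γ2) → IsLeast (ramseySet Γ1 Γ2) 5) ∧
    (¬ (3 ∈ Γ1 ∪ Γ2 ∧ 5 ∈ Γ1 ∪ Γ2) → IsLeast (ramseySet Γ1 Γ2) 6) := by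
  constructor
  · rintro ⟨h3, h5⟩
    constructor
    · refine ⟨by norm_num, fun G => ?_⟩
      rcases h34 with ⟨h31, h32⟩ | ⟨h41, h42⟩
      · rcases G5a Fact5a G with h | h | ⟨hA, hB⟩
        · exact Or.inl ⟨3, h31, h⟩
        · exact Or.inr ⟨3, h32, h⟩
        · rcases h5 with h5 | h5
          · exact Or.inl ⟨5, h5, hA⟩
          · exact Or.inr ⟨5, h5, hB⟩
      · rcases h3 with h3 | h3 <;> rcases h5 with h5 | h5
        · rcases G5s Fact5s G with h | h | h | h
          exacts [Or.inl ⟨4, h41, h⟩, Or.inr ⟨4, h42, h⟩, Or.inl ⟨3, h3, h⟩, Or.inl ⟨5, h5, h⟩]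
        · rcases G5x Fact5x G with h | h | h | h
          exacts [Or.inl ⟨4, h41, h⟩, Or.inr ⟨4, h42, h⟩, Or.inl ⟨3, h3, h⟩, Or.inr ⟨5, h5, h⟩]
        · have hx := G5x Fact5x Gᶜ
          rw [compl_compl] at hx
          rcases hx with h | h | h | h
          exacts [Or.inr ⟨4, h42, h⟩, Or.inl ⟨4, h41, h⟩, Or.inr ⟨3, h3, h⟩, Or.inl ⟨5, h5, h⟩]
        · have hx := G5s Fact5s Gᶜ
          rw [compl_compl] at hx
          rcases hx with h | h | h | h
          exacts [Or.inr ⟨4, h42, h⟩, Or.inl ⟨4, h41, h⟩, Or.inr ⟨3, h3, h⟩, Or.inr ⟨5, h5, h⟩]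
    · intro N hN
      obtain ⟨hNpos, hNR⟩ := hN
      by_contra hlt
      push_neg at hlt
      have hR4 : RamseyProp Γ1 Γ2 4 := RamseyProp_mono (by omega) hNR
      rcases hR4 P4 with ⟨m, hm, hcyc⟩ | ⟨m, hm, hcyc⟩
      · have hm3 := hc1 m hm
        have hm4 := hasCycle_le_card hcyc
        rw [Fintype.card_fin] at hm4
        interval_cases m
        · exact noP4_3 hcyc
        · exact noP4_4 hcyc
      · have hm3 := hc2 m hm
        have hm4 := hasCycle_le_card hcyc
        rw [Fintype.card_fin] at hm4
        interval_cases m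
        · exact noP4c_3 hcyc
        · exact noP4c_4 hcyc
  · intro hn
    constructor
    · refine ⟨by norm_num, fun G => ?_⟩
      rcases h34 with ⟨h31, h32⟩ | ⟨h41, h42⟩
      · rcases (G6 Fact6a Fact6b G).1 with h | h
        · exact Or.inl ⟨3, h31, h⟩
        · exact Or.inr ⟨3, h32, h⟩
      · rcases (G6 Fact6a Fact6b G).2 with h | h
        · exact Or.inl ⟨4, h41, h⟩
        · exact Or.inr ⟨4, h42, h⟩
    · intro N hN
      obtain ⟨hNpos, hNR⟩ := hN
      by_contra hlt
      push_neg at hlt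
      have hR5 : RamseyProp Γ1 Γ2 5 := RamseyProp_mono (by omega) hNR
      rcases not_and_or.mp hn with h3n | h5n
      · rcases hR5 Hgr with ⟨m, hm, hcyc⟩ | ⟨m, hm, hcyc⟩
        · have hm3 := hc1 m hm
          have hm5 := hasCycle_le_card hcyc
          rw [Fintype.card_fin] at hm5
          interval_cases m
          · exact h3n (Set.mem_union_left _ hm)
          · exact noH_4 hcyc
          · exact noH_5 hcyc
        · have hm3 := hc2 m hm
          have hm5 := hasCycle_le_card hcyc
          rw [Fintype.card_fin] at hm5
          interval_cases m
          · exact h3n (Set.mem_union_right _ hm)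
          · exact noHc_4 hcyc
          · exact noHc_5 hcyc
      · rcases hR5 C5gr with ⟨m, hm, hcyc⟩ | ⟨m, hm, hcyc⟩
        · have hm3 := hc1 m hm
          have hm5 := hasCycle_le_card hcyc
          rw [Fintype.card_fin] at hm5
          interval_cases m
          · exact noC5_3 hcyc
          · exact noC5_4 hcyc
          · exact h5n (Set.mem_union_left _ hm)
        · have hm3 := hc2 m hm
          have hm5 := hasCycle_le_card hcyc
          rw [Fintype.card_fin] at hm5
          interval_cases m
          · exact noC5c_3 hcyc
          · exact noC5c_4 hcyc
          · exact h5n (Set.mem_union_right _ hm)
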